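/- Let p ∈ ℝ, let m, C be naturals, and let v : Fin C → ℝ be antitone (listed in descending order). For every subset W ⊆ Fin C with card W ≤ m, ∑_{i ∈ W} (v i − p) ≤ ∑_{i < min(m, C)} max (v i − p) 0. Moreover, equality is attained by the set W = {i : i < min(m, card {i : v i > p})} of the highest-valued bidders whose value exceeds p. Consequently, under a posted price p with capacity m, truthful bidding maximizes the colluders' joint utility, so the posted-price phase of the Hybrid-VCG mechanism is incentive compatible for the colluding group. -/
import Mathlib

private lemma sm_le_apply {k : ℕ} (f : Fin k → ℕ) (hf : StrictMono f) (i : Fin k) :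
    (i : ℕ) ≤ f i := by
  obtain ⟨n, hn⟩ := i
  induction n with
  | zero => exact Nat.zero_le _
  | succ n ih =>
    have h1 : n < k := Nat.lt_of_succ_lt hn
    have h2 := hf (show (⟨n, h1⟩ : Fin k) < ⟨n + 1, hn⟩ by simp [Fin.lt_def])
    have h3 : n ≤ f ⟨n, h1⟩ := ih h1
    show n + 1 ≤ f ⟨n + 1, hn⟩
    omega

private lemma sum_le_sum_range (g : ℕ → ℝ) (hg : Antitone g) (S : Finset ℕ) :
    ∑ n ∈ S, g n ≤ ∑ n ∈ Finset.range S.card, g n := by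
  set f := S.orderEmbOfFin rfl with hf
  have hS : S = Finset.univ.image f := by
    ext x
    simp only [Finset.mem_image, Finset.mem_univ, true_and]
    rw [← Set.mem_range, Finset.range_orderEmbOfFin S rfl, Finset.mem_coe]
  calc ∑ n ∈ S, g n = ∑ i : Fin S.card, g (f i) := by
        conv_lhs => rw [hS]
        rw [Finset.sum_image (fun a _ b _ h => f.injective h)]
    _ ≤ ∑ i : Fin S.card, g i := by
        apply Finset.sum_le_sum
        intro i _
        exact hg (sm_le_apply f f.strictMono i)
    _ = ∑ n ∈ Finset.range S.card, g n := Fin.sum_univ_eq_sum_range _ _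

theorem stmt_10 (p : ℝ) (m C : ℕ) (v : Fin C → ℝ) (hv : Antitone v) :
    (∀ W : Finset (Fin C), W.card ≤ m →
      ∑ i ∈ W, (v i - p) ≤
        ∑ i : Fin (min m C), max (v (Fin.castLE (min_le_right m C) i) - p) 0) ∧
    ((Finset.univ.filter (fun i : Fin C =>
        (i : ℕ) < min m (Finset.univ.filter (fun j : Fin C => p < v j)).card)).card
          ≤ m ∧
      ∑ i ∈ Finset.univ.filter (fun i : Fin C =>
          (i : ℕ) < min m (Finset.univ.filter (fun j : Fin C => p < v j)).card),
          (v i - p) =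
        ∑ i : Fin (min m C), max (v (Fin.castLE (min_le_right m C) i) - p) 0) := by
  classical
  set g : ℕ → ℝ := fun n => if h : n < C then max (v ⟨n, h⟩ - p) 0 else 0 with hgdef
  have hg0 : ∀ n, 0 ≤ g n := by
    intro n
    simp only [hgdef]
    split <;> simp
  have hg : Antitone g := by
    intro a b hab
    by_cases hb : b < C
    · have ha : a < C := lt_of_le_of_lt hab hb
      simp only [hgdef, dif_pos hb, dif_pos ha]
      exact max_le_max (sub_le_sub_right (hv (Fin.mk_le_mk.2 hab)) p) le_rfl
    · have hb0 : g b = 0 := by simp [hgdef, hb]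
      rw [hb0]
      exact hg0 a
  have hgval : ∀ i : Fin C, g i = max (v i - p) 0 := by
    intro i
    simp only [hgdef, dif_pos i.isLt]
  have hRHS : ∑ i : Fin (min m C), max (v (Fin.castLE (min_le_right m C) i) - p) 0
      = ∑ n ∈ Finset.range (min m C), g n := by
    rw [← Fin.sum_univ_eq_sum_range]
    apply Finset.sum_congr rfl
    intro i _
    rw [show g i = _ from hgval (Fin.castLE (min_le_right m C) i)]
  constructor
  · intro W hW
    have hWC : W.card ≤ C := by
      simpa using Finset.card_le_univ W
    calc ∑ i ∈ W, (v i - p) ≤ ∑ i ∈ W, g i := by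
          apply Finset.sum_le_sum
          intro i _
          rw [hgval]
          exact le_max_left _ _
      _ = ∑ n ∈ W.image Fin.val, g n := by
          rw [Finset.sum_image (fun a _ b _ h => Fin.val_injective h)]
      _ ≤ ∑ n ∈ Finset.range (W.image Fin.val).card, g n := sum_le_sum_range g hg _
      _ ≤ ∑ n ∈ Finset.range (min m C), g n := by
          apply Finset.sum_le_sum_of_subset_of_nonneg
          · apply Finset.range_subset_range.2
            rw [Finset.card_image_of_injective _ Fin.val_injective]
            omega
          · intro n _ _; exact hg0 n
      _ = _ := hRHS.symm
  · set T := Finset.univ.filter (fun j : Fin C => p < v j) with hTdef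
    set t := T.card with htdef
    set k := min m t with hkdef
    have htC : t ≤ C := by
      calc t ≤ (Finset.univ : Finset (Fin C)).card := Finset.card_le_univ T
        _ = C := by simp
    have hkC : k ≤ C := le_trans (min_le_right m t) htC
    have hkm : k ≤ m := min_le_left m t
    have hkmC : k ≤ min m C := le_min hkm hkC
    have hT : ∀ i : Fin C, p < v i ↔ (i : ℕ) < t := by
      intro i
      constructor
      · intro h
        have hsub : Finset.Iic i ⊆ T := by
          intro j hj
          rw [Finset.mem_Iic] at hj
          simp only [hTdef, Finset.mem_filter, Finset.mem_univ, true_and]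
          exact lt_of_lt_of_le h (hv hj)
        have := Finset.card_le_card hsub
        rw [Fin.card_Iic] at this
        omega
      · intro h
        by_contra hcon
        push_neg at hcon
        have hsub : T ⊆ Finset.Iio i := by
          intro j hj
          simp only [hTdef, Finset.mem_filter, Finset.mem_univ, true_and] at hj
          rw [Finset.mem_Iio]
          by_contra hji
          push_neg at hji
          exact absurd (lt_of_lt_of_le hj (le_trans (hv hji) hcon)) (lt_irrefl p)
        have := Finset.card_le_card hsub
        rw [Fin.card_Iio] at this
        omega
    set W₀ := Finset.univ.filter (fun i : Fin C => (i : ℕ) < k) with hW₀def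
    have himg : W₀.image Fin.val = Finset.range k := by
      ext n
      simp only [hW₀def, Finset.mem_image, Finset.mem_filter, Finset.mem_univ, true_and,
        Finset.mem_range]
      constructor
      · rintro ⟨i, hi, rfl⟩; exact hi
      · intro hn; exact ⟨⟨n, lt_of_lt_of_le hn hkC⟩, hn, rfl⟩
    constructor
    · calc W₀.card = (W₀.image Fin.val).card :=
            (Finset.card_image_of_injective _ Fin.val_injective).symm
        _ = k := by rw [himg, Finset.card_range]
        _ ≤ m := hkm
    · rw [hRHS]
      have hsplit : ∑ n ∈ Finset.range (min m C), g n = ∑ n ∈ Finset.range k, g n := by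
        symm
        apply Finset.sum_subset (Finset.range_subset_range.2 hkmC)
        intro n hn hnk
        rw [Finset.mem_range] at hn
        rw [Finset.mem_range] at hnk
        push_neg at hnk
        have hnC : n < C := lt_of_lt_of_le hn (min_le_right m C)
        have hnt : t ≤ n := by omega
        have : ¬ p < v ⟨n, hnC⟩ := by
          rw [hT]
          simp only [not_lt]
          exact hnt
        push_neg at this
        simp only [hgdef, dif_pos hnC]
        exact max_eq_right (by linarith)
      rw [hsplit]
      calc ∑ i ∈ W₀, (v i - p) = ∑ i ∈ W₀, g i := by
            apply Finset.sum_congr rfl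
            intro i hi
            simp only [hW₀def, Finset.mem_filter, Finset.mem_univ, true_and] at hi
            rw [hgval]
            have : p < v i := (hT i).2 (by omega)
            rw [max_eq_left (by linarith)]
        _ = ∑ n ∈ W₀.image Fin.val, g n := by
            rw [Finset.sum_image (fun a _ b _ h => Fin.val_injective h)]
        _ = ∑ n ∈ Finset.range k, g n := by rw [himg]
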